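/- Let a,b ∈ ℝ^d and let P = (a = p₀, p₁, …, p_m = b) be a polygonal ab-path with total length at most (1+ε)‖ab‖, where 0 < ε < 1. For an integer i with 1 ≤ i ≤ ⌊1/√ε⌋, let E(i√ε) be the set of edges e of P whose direction makes an angle at most i·√ε with the direction of the vector b−a. Then the total length of the edges in E(i√ε) is at least (1 − 2/i²)·‖ab‖. -/

import Mathlib

/-- Total length of a polygonal path (sum of distances between consecutive
vertices). -/
noncomputable def pathWeight {X : Type*} [MetricSpace X] : List X → ℝ
  | [] => 0
  | [_] => 0
  | a :: b :: rest => dist a b + pathWeight (b :: rest)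

open Classical in
/-- Total length of the edges of the path `p` whose direction makes an angle at
most `θ` with the direction `w`. -/
noncomputable def alignedLen {d : ℕ} (p : List (EuclideanSpace ℝ (Fin d)))
    (w : EuclideanSpace ℝ (Fin d)) (θ : ℝ) : ℝ :=
  ((p.zip p.tail).map (fun q =>
    if InnerProductGeometry.angle (q.2 - q.1) w ≤ θ then dist q.1 q.2 else 0)).sum

private lemma cos_facts (θ : ℝ) (h0 : 0 < θ) (h1 : θ ≤ 1) :
    0 < Real.cos θ ∧ Real.cos θ < 1 ∧ θ ^ 2 * Real.cos θ ≤ 2 * (1 - Real.cos θ) := by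
  have habs : |θ| ≤ 1 := by rw [abs_of_pos h0]; exact h1
  have hb := Real.cos_bound habs
  rw [abs_of_pos h0] at hb
  have hb' := abs_le.mp hb
  have h6 : θ ^ 6 ≤ θ ^ 4 := pow_le_pow_of_le_one h0.le h1 (by norm_num)
  have h4 : θ ^ 4 ≤ θ ^ 2 := pow_le_pow_of_le_one h0.le h1 (by norm_num)
  have h2 : θ ^ 2 ≤ 1 := pow_le_one₀ h0.le h1
  refine ⟨by nlinarith [hb'.1, hb'.2], by nlinarith [hb'.1, hb'.2, sq_nonneg θ], ?_⟩
  nlinarith [hb'.1, hb'.2, sq_nonneg θ, mul_pos h0 h0]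

private lemma pathWeight_eq {X : Type*} [MetricSpace X] : ∀ (p : List X),
    pathWeight p = ((p.zip p.tail).map (fun q => dist q.1 q.2)).sum
  | [] => by simp [pathWeight]
  | [x] => by simp [pathWeight]
  | a :: b :: rest => by
      rw [show pathWeight (a :: b :: rest) = dist a b + pathWeight (b :: rest) from rfl,
        pathWeight_eq (b :: rest)]
      simp

private lemma telescope {d : ℕ} (w : EuclideanSpace ℝ (Fin d)) :
    ∀ (l : List (EuclideanSpace ℝ (Fin d))) (x : EuclideanSpace ℝ (Fin d)),
    (((x :: l).zip l).map (fun q => (inner ℝ (q.2 - q.1) w : ℝ))).sum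
      = inner ℝ ((x :: l).getLast (by simp) - x) w
  | [], x => by simp
  | y :: t, x => by
      have ih := telescope w t y
      simp only [List.zip_cons_cons, List.map_cons, List.sum_cons, ih]
      have hl : (x :: y :: t).getLast (by simp) = (y :: t).getLast (by simp) :=
        List.getLast_cons _
      rw [hl, ← inner_add_left]
      congr 1
      abel

private lemma sum_comb {α : Type*} (l : List α) (f g : α → ℝ) (c1 c2 : ℝ) :
    (l.map (fun x => c1 * f x + c2 * g x)).sum
      = c1 * (l.map f).sum + c2 * (l.map g).sum := by
  induction l with
  | nil => simp
  | cons a t ih => simp only [List.map_cons, List.sum_cons, ih]; ring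

private lemma final_arith (W L T c I ε : ℝ) (hWpos : 0 < W) (hc0 : 0 < c)
    (hc1 : c < 1) (hI2 : 0 < I ^ 2) (hkey' : I ^ 2 * ε * c ≤ 2 * (1 - c))
    (h2 : W ≤ (1 - c) * L + c * T) (hlen' : T ≤ (1 + ε) * W) :
    (1 - 2 / I ^ 2) * W ≤ L := by
  have h3 : W ≤ (1 - c) * L + c * ((1 + ε) * W) := by
    have := mul_le_mul_of_nonneg_left hlen' hc0.le
    linarith
  have hεc : ε * c ≤ 2 * (1 - c) / I ^ 2 := by
    rw [le_div_iff₀ hI2]; nlinarith [hkey']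
  have e2 : ε * c * W ≤ 2 * (1 - c) / I ^ 2 * W :=
    mul_le_mul_of_nonneg_right hεc hWpos.le
  have h4 : (1 - c) * ((1 - 2 / I ^ 2) * W) ≤ (1 - c) * L := by
    have e1 : (1 - c) * ((1 - 2 / I ^ 2) * W)
        = (1 - c) * W - 2 * (1 - c) / I ^ 2 * W := by
      field_simp
    rw [e1]
    nlinarith [h3, e2]
  exact le_of_mul_le_mul_left h4 (by linarith : (0 : ℝ) < 1 - c)

open InnerProductGeometry in
private lemma edge_bound {d : ℕ} (w e : EuclideanSpace ℝ (Fin d)) (θ : ℝ)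
    (hθ0 : 0 ≤ θ) (hθc : 0 ≤ Real.cos θ) :
    (inner ℝ e w : ℝ) ≤ ‖w‖ * (if angle e w ≤ θ then ‖e‖ else Real.cos θ * ‖e‖) := by
  by_cases h : angle e w ≤ θ
  · rw [if_pos h, mul_comm]
    exact real_inner_le_norm e w
  · rw [if_neg h]
    rcases eq_or_ne e 0 with rfl | he
    · simp
    rcases eq_or_ne w 0 with rfl | hw
    · simp [mul_nonneg (norm_nonneg _) (mul_nonneg hθc (norm_nonneg _))]
    have hne : (0:ℝ) < ‖e‖ * ‖w‖ := mul_pos (norm_pos_iff.mpr he) (norm_pos_iff.mpr hw)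
    have h1 : Real.cos (angle e w) ≤ Real.cos θ :=
      Real.cos_le_cos_of_nonneg_of_le_pi hθ0 (angle_le_pi e w) (le_of_lt (lt_of_not_ge h))
    have he2 : (inner ℝ e w : ℝ) = Real.cos (angle e w) * (‖e‖ * ‖w‖) := by
      rw [cos_angle]; field_simp
    rw [he2]
    calc Real.cos (angle e w) * (‖e‖ * ‖w‖) ≤ Real.cos θ * (‖e‖ * ‖w‖) :=
          mul_le_mul_of_nonneg_right h1 hne.le
      _ = ‖w‖ * (Real.cos θ * ‖e‖) := by ring

/-- Let `P = (a = p₀, …, p_m = b)` be a polygonal `ab`-path of total length at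
most `(1+ε)‖ab‖`, with `0 < ε < 1`. For `1 ≤ i ≤ 1/√ε`, the total length of the
edges making an angle at most `i√ε` with the direction of `b − a` is at least
`(1 − 2/i²)·‖ab‖`. -/
theorem aligned_edges_length {d : ℕ} (ε : ℝ) (hε0 : 0 < ε) (hε1 : ε < 1)
    (a b : EuclideanSpace ℝ (Fin d)) (p : List (EuclideanSpace ℝ (Fin d)))
    (i : ℕ) (hi1 : 1 ≤ i) (hi2 : (i : ℝ) ≤ 1 / Real.sqrt ε)
    (hhead : p.head? = some a) (hlast : p.getLast? = some b)
    (hlen : pathWeight p ≤ (1 + ε) * dist a b) :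
    (1 - 2 / (i : ℝ) ^ 2) * dist a b ≤
      alignedLen p (b - a) ((i : ℝ) * Real.sqrt ε) := by
  set w : EuclideanSpace ℝ (Fin d) := b - a with hw
  set θ : ℝ := (i : ℝ) * Real.sqrt ε with hθdef
  set I : ℝ := (i : ℝ) with hI
  have hs : 0 < Real.sqrt ε := Real.sqrt_pos.mpr hε0
  have hIpos : (1:ℝ) ≤ I := by rw [hI]; exact_mod_cast hi1
  have hθ0 : 0 < θ := mul_pos (lt_of_lt_of_le one_pos hIpos) hs
  have hθ1 : θ ≤ 1 := by
    rw [hθdef]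
    exact (le_div_iff₀ hs).mp hi2
  obtain ⟨hc0, hc1, hkey⟩ := cos_facts θ hθ0 hθ1
  set c : ℝ := Real.cos θ with hcdef
  -- nonnegativity of alignedLen
  have hL1nonneg : 0 ≤ alignedLen p w θ := by
    apply List.sum_nonneg
    intro x hx
    simp only [List.mem_map] at hx
    obtain ⟨q, _, rfl⟩ := hx
    split
    · exact dist_nonneg
    · exact le_rfl
  -- p is nonempty, starts with a, ends with b
  obtain ⟨x, l, rfl⟩ : ∃ x l, p = x :: l := by
    cases p with
    | nil => simp at hhead
    | cons x l => exact ⟨x, l, rfl⟩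
  have hxa : a = x := by have h := hhead; simp at h; exact h.symm
  subst hxa
  have hb : (a :: l).getLast (by simp) = b := by
    rw [List.getLast?_eq_getLast (by simp : (a :: l) ≠ [])] at hlast
    simpa using hlast
  -- telescoping sum of projections
  have htel : (((a :: l).zip l).map (fun q => (inner ℝ (q.2 - q.1) w : ℝ))).sum
      = ‖w‖ ^ 2 := by
    rw [telescope w l a, hb, ← hw, real_inner_self_eq_norm_sq]
  -- per-edge bound
  have hbound : (((a :: l).zip l).map (fun q => (inner ℝ (q.2 - q.1) w : ℝ))).sum
      ≤ (((a :: l).zip l).map (fun q =>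
          (‖w‖ * (1 - c)) * (@ite ℝ (InnerProductGeometry.angle (q.2 - q.1) w ≤ θ)
            (Classical.propDecidable _) (dist q.1 q.2) 0)
          + (‖w‖ * c) * dist q.1 q.2)).sum := by
    apply List.sum_le_sum
    intro q _
    have hE := edge_bound w (q.2 - q.1) θ hθ0.le hc0.le
    have hd : dist q.1 q.2 = ‖q.2 - q.1‖ := dist_eq_norm' q.1 q.2
    by_cases hA : InnerProductGeometry.angle (q.2 - q.1) w ≤ θ
    · rw [if_pos hA] at hE ⊢
      rw [hd]
      calc (inner ℝ (q.2 - q.1) w : ℝ) ≤ ‖w‖ * ‖q.2 - q.1‖ := hE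
        _ = ‖w‖ * (1 - c) * ‖q.2 - q.1‖ + ‖w‖ * c * ‖q.2 - q.1‖ := by ring
    · rw [if_neg hA] at hE ⊢
      rw [hd]
      calc (inner ℝ (q.2 - q.1) w : ℝ) ≤ ‖w‖ * (c * ‖q.2 - q.1‖) := hE
        _ = ‖w‖ * (1 - c) * 0 + ‖w‖ * c * ‖q.2 - q.1‖ := by ring
  -- identify the RHS sum
  have hsum : (((a :: l).zip l).map (fun q =>
          (‖w‖ * (1 - c)) * (@ite ℝ (InnerProductGeometry.angle (q.2 - q.1) w ≤ θ)
            (Classical.propDecidable _) (dist q.1 q.2) 0)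
          + (‖w‖ * c) * dist q.1 q.2)).sum
      = (‖w‖ * (1 - c)) * alignedLen (a :: l) w θ + (‖w‖ * c) * pathWeight (a :: l) := by
    rw [sum_comb, pathWeight_eq]
    simp only [alignedLen, List.tail_cons]
  have htot : ‖w‖ ^ 2 ≤ (‖w‖ * (1 - c)) * alignedLen (a :: l) w θ
      + (‖w‖ * c) * pathWeight (a :: l) := by
    rw [← htel, ← hsum]; exact hbound
  have hWnorm : dist a b = ‖w‖ := dist_eq_norm' a b
  by_cases hW0 : ‖w‖ = 0
  · rw [hWnorm, hW0, mul_zero]; exact hL1nonneg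
  have hWpos : 0 < ‖w‖ := (norm_nonneg w).lt_of_ne (Ne.symm hW0)
  set L := alignedLen (a :: l) w θ with hLdef
  set T := pathWeight (a :: l) with hTdef
  have h2 : ‖w‖ ≤ (1 - c) * L + c * T := by
    have h' : ‖w‖ * ‖w‖ ≤ ‖w‖ * ((1 - c) * L + c * T) := by
      calc ‖w‖ * ‖w‖ = ‖w‖ ^ 2 := (sq ‖w‖).symm
        _ ≤ (‖w‖ * (1 - c)) * L + (‖w‖ * c) * T := htot
        _ = ‖w‖ * ((1 - c) * L + c * T) := by ring
    exact le_of_mul_le_mul_left h' hWpos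
  have hlen' : T ≤ (1 + ε) * ‖w‖ := by rw [← hWnorm]; exact hlen
  have hθsq : θ ^ 2 = I ^ 2 * ε := by
    rw [hθdef, mul_pow, Real.sq_sqrt hε0.le]
  have hI2 : (0 : ℝ) < I ^ 2 := pow_pos (lt_of_lt_of_le one_pos hIpos) 2
  have hkey' : I ^ 2 * ε * c ≤ 2 * (1 - c) := by rw [← hθsq]; exact hkey
  rw [hWnorm]
  exact final_arith ‖w‖ L T c I ε hWpos hc0 hc1 hI2 hkey' h2 hlen'
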